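/- arXiv:0909.4564 — 2 statements merged into one kernel-verified Lean document; each statement's English description precedes it below -/
import Mathlib

section
/- Let w be a C² solution of the reduced equation D_r[(c₂² - g(w))w_r + c₁c₂ w_s] + D_s[c₁c₂ w_r + (c₁² - f(w))w_s] = 0 of the self-similar form w(r,s) = v(s/r) for r > 0, where v is C². Then for all n = s/r, the quantity v'(n)·(−c₂²n² + 2c₁c₂ n + n²g(v(n)) − c₁² + f(v(n))) is constant in n. -/
/-- Partial derivative of a two-variable function w.r.t. its first variable `r`. -/
noncomputable def pr (w : ℝ → ℝ → ℝ) (r s : ℝ) : ℝ := deriv (fun ρ => w ρ s) r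
/-- Partial derivative of a two-variable function w.r.t. its second variable `s`. -/
noncomputable def ps (w : ℝ → ℝ → ℝ) (r s : ℝ) : ℝ := deriv (fun σ => w r σ) s

/-- if `w(r,s) = v(s/r)` solves the reduced conservation law for `r > 0`,
then `v'(n)·(-c₂² n² + 2 c₁ c₂ n + n² g(v) - c₁² + f(v))` is constant in `n`. -/
theorem stmt_11 (f g : ℝ → ℝ) (c₁ c₂ : ℝ) (v : ℝ → ℝ)
    (hv : ContDiff ℝ 2 v) (hf : ContDiff ℝ 1 f) (hg : ContDiff ℝ 1 g)
    (w : ℝ → ℝ → ℝ) (hw : ∀ r s, w r s = v (s / r))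
    (hsol : ∀ r s, 0 < r →
      deriv (fun ρ => (c₂ ^ 2 - g (w ρ s)) * pr w ρ s + c₁ * c₂ * ps w ρ s) r
        + deriv (fun σ => c₁ * c₂ * pr w r σ + (c₁ ^ 2 - f (w r σ)) * ps w r σ) s = 0) :
    ∀ n₁ n₂ : ℝ,
      deriv v n₁ * (-c₂ ^ 2 * n₁ ^ 2 + 2 * c₁ * c₂ * n₁ + n₁ ^ 2 * g (v n₁) - c₁ ^ 2 + f (v n₁))
        = deriv v n₂ *
            (-c₂ ^ 2 * n₂ ^ 2 + 2 * c₁ * c₂ * n₂ + n₂ ^ 2 * g (v n₂) - c₁ ^ 2 + f (v n₂)) := by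
  have hvd : Differentiable ℝ v := hv.differentiable (by norm_num)
  have hdv : Differentiable ℝ (deriv v) := by
    have h2 := hv
    rw [show (2 : WithTop ℕ∞) = 1 + 1 from rfl, contDiff_succ_iff_deriv] at h2
    exact h2.2.2.differentiable (by norm_num)
  have hfd : Differentiable ℝ f := hf.differentiable (by norm_num)
  have hgd : Differentiable ℝ g := hg.differentiable (by norm_num)
  set A : ℝ → ℝ := fun n => deriv v n * (-(c₂ ^ 2 - g (v n)) * n + c₁ * c₂) with hAdef
  set B : ℝ → ℝ := fun n => deriv v n * (-(c₁ * c₂) * n + (c₁ ^ 2 - f (v n))) with hBdef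
  have hAdiff : Differentiable ℝ A := by
    apply hdv.mul
    exact ((((differentiable_const _).sub (hgd.comp hvd)).neg.mul differentiable_id).add
      (differentiable_const _))
  have hBdiff : Differentiable ℝ B := by
    apply hdv.mul
    exact (((differentiable_const _).mul differentiable_id).add
      ((differentiable_const _).sub (hfd.comp hvd)))
  -- partial derivatives of w for r ≠ 0
  have hpr : ∀ r s : ℝ, r ≠ 0 → pr w r s = deriv v (s / r) * (s * -(r ^ 2)⁻¹) := by
    intro r s hr
    have h1 : HasDerivAt (fun ρ : ℝ => s * ρ⁻¹) (s * -(r ^ 2)⁻¹) r :=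
      (hasDerivAt_inv hr).const_mul s
    have h2 : HasDerivAt (fun ρ : ℝ => v (s / ρ)) (deriv v (s / r) * (s * -(r ^ 2)⁻¹)) r := by
      have := ((hvd (s / r)).hasDerivAt.comp r (show HasDerivAt (fun ρ : ℝ => s / ρ) _ r by simpa [div_eq_mul_inv] using h1))
      simpa [div_eq_mul_inv, Function.comp_def] using this
    have heq : (fun ρ => w ρ s) = fun ρ => v (s / ρ) := by funext ρ; rw [hw]
    rw [pr, heq, h2.deriv]
  have hps : ∀ r s : ℝ, r ≠ 0 → ps w r s = deriv v (s / r) * r⁻¹ := by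
    intro r s hr
    have h1 : HasDerivAt (fun σ : ℝ => σ * r⁻¹) r⁻¹ s := by
      simpa using (hasDerivAt_id s).mul_const r⁻¹
    have h2 : HasDerivAt (fun σ : ℝ => v (σ / r)) (deriv v (s / r) * r⁻¹) s := by
      have := ((hvd (s / r)).hasDerivAt.comp s (by simpa [div_eq_mul_inv] using h1))
      simpa [div_eq_mul_inv, Function.comp_def] using this
    have heq : (fun σ => w r σ) = fun σ => v (σ / r) := by funext σ; rw [hw]
    rw [ps, heq, h2.deriv]
  -- the key differential relation
  have hrel : ∀ n : ℝ, A n + n * deriv A n - deriv B n = 0 := by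
    intro n
    have hs := hsol 1 n one_pos
    -- first summand
    have hT : deriv (fun ρ => (c₂ ^ 2 - g (w ρ n)) * pr w ρ n + c₁ * c₂ * ps w ρ n) 1
        = -(n * deriv A n) - A n := by
      have hev : (fun ρ => (c₂ ^ 2 - g (w ρ n)) * pr w ρ n + c₁ * c₂ * ps w ρ n)
          =ᶠ[nhds (1:ℝ)] fun ρ => A (n / ρ) * ρ⁻¹ := by
        filter_upwards [eventually_gt_nhds (show (0:ℝ) < 1 by norm_num)] with ρ hρ
        have hρ' : ρ ≠ 0 := ne_of_gt hρ
        rw [hw, hpr ρ n hρ', hps ρ n hρ', hAdef]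
        field_simp
      rw [hev.deriv_eq]
      have h1 : HasDerivAt (fun ρ : ℝ => A (n / ρ)) (deriv A n * (n * -((1:ℝ) ^ 2)⁻¹)) 1 := by
        have hin : HasDerivAt (fun ρ : ℝ => n * ρ⁻¹) (n * -((1:ℝ) ^ 2)⁻¹) 1 :=
          (hasDerivAt_inv one_ne_zero).const_mul n
        have := (hAdiff (n / 1)).hasDerivAt.comp 1 (show HasDerivAt (fun ρ : ℝ => n / ρ) _ 1 by simpa [div_eq_mul_inv] using hin)
        simpa [div_eq_mul_inv, Function.comp_def] using this
      have h2 : HasDerivAt (fun ρ : ℝ => ρ⁻¹) (-((1:ℝ) ^ 2)⁻¹) 1 := hasDerivAt_inv one_ne_zero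
      have h3 := h1.mul h2
      rw [show (fun ρ : ℝ => A (n / ρ) * ρ⁻¹) = ((fun ρ => A (n / ρ)) * fun ρ => ρ⁻¹) from rfl, h3.deriv]
      simp
      ring
    -- second summand
    have hU : (fun σ => c₁ * c₂ * pr w 1 σ + (c₁ ^ 2 - f (w 1 σ)) * ps w 1 σ) = B := by
      funext σ
      rw [hw, hpr 1 σ one_ne_zero, hps 1 σ one_ne_zero, hBdef]
      simp
      ring
    rw [hT, hU] at hs
    linarith
  -- the conserved quantity
  set Φ : ℝ → ℝ := fun n => n * A n - B n with hΦdef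
  have hΦdiff : Differentiable ℝ Φ := (differentiable_id.mul hAdiff).sub hBdiff
  have hΦderiv : ∀ n, deriv Φ n = 0 := by
    intro n
    have h1 : HasDerivAt (fun m : ℝ => m * A m) (1 * A n + n * deriv A n) n :=
      (hasDerivAt_id n).mul (hAdiff n).hasDerivAt
    have h2 : HasDerivAt Φ (1 * A n + n * deriv A n - deriv B n) n :=
      h1.sub (hBdiff n).hasDerivAt
    rw [h2.deriv]
    have := hrel n
    linarith
  have hconst : ∀ n₁ n₂ : ℝ, Φ n₁ = Φ n₂ := fun n₁ n₂ =>
    is_const_of_deriv_eq_zero hΦdiff hΦderiv n₁ n₂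
  intro n₁ n₂
  have key : ∀ n : ℝ, deriv v n *
      (-c₂ ^ 2 * n ^ 2 + 2 * c₁ * c₂ * n + n ^ 2 * g (v n) - c₁ ^ 2 + f (v n)) = Φ n := by
    intro n
    rw [hΦdef]
    simp only [hAdef, hBdef]
    ring
  rw [key n₁, key n₂]
  exact hconst n₁ n₂
end

section
/- Let u(t,x,y) = v((x - c₁t)/(y - c₂t)) where v is a C² function of one variable satisfying v'(n)·(−c₂²n² + 2c₁c₂ n + n²·g(v(n)) − c₁² + f(v(n))) = C for some constant C on an interval. Then u satisfies u_tt − (f(u)u_x)_x − (g(u)u_y)_y = 0 on the open set where y − c₂t ≠ 0 (and v' exists and the first-order relation can be differentiated). -/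
set_option maxHeartbeats 2000000


/-- Partial derivative with respect to the first variable. -/
noncomputable def pt (u : ℝ → ℝ → ℝ → ℝ) (t x y : ℝ) : ℝ := deriv (fun τ => u τ x y) t
/-- Partial derivative with respect to the second variable. -/
noncomputable def px (u : ℝ → ℝ → ℝ → ℝ) (t x y : ℝ) : ℝ := deriv (fun ξ => u t ξ y) x
/-- Partial derivative with respect to the third variable. -/
noncomputable def py (u : ℝ → ℝ → ℝ → ℝ) (t x y : ℝ) : ℝ := deriv (fun η => u t x η) y

/-- if `v` solves the first-order reduced ODE
`v'(n)·(-c₂² n² + 2 c₁ c₂ n + n² g(v) - c₁² + f(v)) = C`, then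
`u(t,x,y) = v((x - c₁ t)/(y - c₂ t))` solves `u_tt - (f(u)u_x)_x - (g(u)u_y)_y = 0`
wherever `y - c₂ t ≠ 0`. -/
theorem stmt_12 (f g : ℝ → ℝ) (c₁ c₂ C : ℝ) (v : ℝ → ℝ)
    (hv : ContDiff ℝ 2 v) (hf : ContDiff ℝ 1 f) (hg : ContDiff ℝ 1 g)
    (hODE : ∀ n : ℝ,
      deriv v n * (-c₂ ^ 2 * n ^ 2 + 2 * c₁ * c₂ * n + n ^ 2 * g (v n) - c₁ ^ 2 + f (v n)) = C)
    (u : ℝ → ℝ → ℝ → ℝ)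
    (hu : ∀ t x y, u t x y = v ((x - c₁ * t) / (y - c₂ * t))) :
    ∀ t x y, y - c₂ * t ≠ 0 →
      deriv (fun τ => pt u τ x y) t
        - deriv (fun ξ => f (u t ξ y) * px u t ξ y) x
        - deriv (fun η => g (u t x η) * py u t x η) y = 0 := by
  -- differentiability facts
  have hvd : Differentiable ℝ v := hv.differentiable (by norm_num)
  have hv2 : ContDiff ℝ (1 + 1 : ℕ) v := by exact_mod_cast hv
  have hv1d : Differentiable ℝ (deriv v) :=
    ((contDiff_succ_iff_deriv (n := 1)).mp (by rw [one_add_one_eq_two]; exact hv)).2.2.differentiable (by norm_num)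
  have hfd : Differentiable ℝ f := hf.differentiable (by norm_num)
  have hgd : Differentiable ℝ g := hg.differentiable (by norm_num)
  have Hv : ∀ z : ℝ, HasDerivAt v (deriv v z) z := fun z => (hvd z).hasDerivAt
  have Hv' : ∀ z : ℝ, HasDerivAt (deriv v) (deriv (deriv v) z) z := fun z => (hv1d z).hasDerivAt
  have Hf : ∀ z : ℝ, HasDerivAt f (deriv f z) z := fun z => (hfd z).hasDerivAt
  have Hg : ∀ z : ℝ, HasDerivAt g (deriv g z) z := fun z => (hgd z).hasDerivAt
  -- the key identity: derivative of the constant function v' * Q is zero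
  have hkey : ∀ n : ℝ,
      deriv (deriv v) n * (-c₂ ^ 2 * n ^ 2 + 2 * c₁ * c₂ * n + n ^ 2 * g (v n) - c₁ ^ 2 + f (v n))
      + deriv v n * (-2 * c₂ ^ 2 * n + 2 * c₁ * c₂
          + (2 * n * g (v n) + n ^ 2 * (deriv g (v n) * deriv v n))
          + deriv f (v n) * deriv v n) = 0 := by
    intro n
    have hQ : HasDerivAt (fun m : ℝ =>
        -c₂ ^ 2 * m ^ 2 + 2 * c₁ * c₂ * m + m ^ 2 * g (v m) - c₁ ^ 2 + f (v m))
        (-2 * c₂ ^ 2 * n + 2 * c₁ * c₂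
          + (2 * n * g (v n) + n ^ 2 * (deriv g (v n) * deriv v n))
          + deriv f (v n) * deriv v n) n := by
      have h1 : HasDerivAt (fun m : ℝ => m ^ 2 * g (v m))
          (2 * n * g (v n) + n ^ 2 * (deriv g (v n) * deriv v n)) n := by
        have := (hasDerivAt_pow 2 n).mul ((Hg (v n)).comp n (Hv n))
        refine this.congr_deriv ?_
        simp [Function.comp]
      have h2 : HasDerivAt (fun m : ℝ => f (v m)) (deriv f (v n) * deriv v n) n :=
        (Hf (v n)).comp n (Hv n)
      have h3 : HasDerivAt (fun m : ℝ => -c₂ ^ 2 * m ^ 2 + 2 * c₁ * c₂ * m)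
          (-2 * c₂ ^ 2 * n + 2 * c₁ * c₂) n := by
        have := ((hasDerivAt_pow 2 n).const_mul (-c₂ ^ 2)).add ((hasDerivAt_id n).const_mul (2 * c₁ * c₂))
        refine this.congr_deriv ?_
        push_cast; ring
      have := ((h3.add h1).sub_const (c₁ ^ 2)).add h2
      exact this
    have hF : HasDerivAt (fun m : ℝ => deriv v m *
        (-c₂ ^ 2 * m ^ 2 + 2 * c₁ * c₂ * m + m ^ 2 * g (v m) - c₁ ^ 2 + f (v m)))
        (deriv (deriv v) n * (-c₂ ^ 2 * n ^ 2 + 2 * c₁ * c₂ * n + n ^ 2 * g (v n) - c₁ ^ 2 + f (v n))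
          + deriv v n * (-2 * c₂ ^ 2 * n + 2 * c₁ * c₂
            + (2 * n * g (v n) + n ^ 2 * (deriv g (v n) * deriv v n))
            + deriv f (v n) * deriv v n)) n := (Hv' n).mul hQ
    have hc : (fun m : ℝ => deriv v m *
        (-c₂ ^ 2 * m ^ 2 + 2 * c₁ * c₂ * m + m ^ 2 * g (v m) - c₁ ^ 2 + f (v m))) = fun _ => C :=
      funext hODE
    have := hF.deriv
    rw [hc, deriv_const] at this
    linarith [this]
  intro t x y hb
  -- X part
  have hNx : ∀ ξ : ℝ, HasDerivAt (fun ξ' => (ξ' - c₁ * t) / (y - c₂ * t)) (1 / (y - c₂ * t)) ξ :=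
    fun ξ => ((hasDerivAt_id ξ).sub_const (c₁ * t)).div_const (y - c₂ * t)
  have hpx : ∀ ξ : ℝ, px u t ξ y = deriv v ((ξ - c₁ * t) / (y - c₂ * t)) * (1 / (y - c₂ * t)) := by
    intro ξ
    have hfun : (fun ξ' => u t ξ' y) = fun ξ' => v ((ξ' - c₁ * t) / (y - c₂ * t)) :=
      funext fun ξ' => hu t ξ' y
    rw [px, hfun]
    exact ((Hv _).comp ξ (hNx ξ)).deriv
  have hXfun : (fun ξ => f (u t ξ y) * px u t ξ y) =
      fun ξ => f (v ((ξ - c₁ * t) / (y - c₂ * t))) *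
        (deriv v ((ξ - c₁ * t) / (y - c₂ * t)) * (1 / (y - c₂ * t))) := by
    funext ξ
    rw [hu, hpx ξ]
  have hX : deriv (fun ξ => f (u t ξ y) * px u t ξ y) x =
      (deriv f (v ((x - c₁ * t) / (y - c₂ * t))) *
        (deriv v ((x - c₁ * t) / (y - c₂ * t)) * (1 / (y - c₂ * t)))) *
        (deriv v ((x - c₁ * t) / (y - c₂ * t)) * (1 / (y - c₂ * t)))
      + f (v ((x - c₁ * t) / (y - c₂ * t))) *
        (deriv (deriv v) ((x - c₁ * t) / (y - c₂ * t)) * (1 / (y - c₂ * t)) * (1 / (y - c₂ * t))) := by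
    rw [hXfun]
    exact (((Hf _).comp x ((Hv _).comp x (hNx x))).mul
      (((Hv' _).comp x (hNx x)).mul_const (1 / (y - c₂ * t)))).deriv
  -- Y part
  have hNy : ∀ η : ℝ, η - c₂ * t ≠ 0 →
      HasDerivAt (fun η' => (x - c₁ * t) / (η' - c₂ * t))
        (-(x - c₁ * t) / (η - c₂ * t) ^ 2) η := by
    intro η hη
    have := (hasDerivAt_const η (x - c₁ * t)).div ((hasDerivAt_id η).sub_const (c₂ * t)) hη
    refine this.congr_deriv ?_
    simp only [id_eq]
    ring
  have hpy : ∀ η : ℝ, η - c₂ * t ≠ 0 → py u t x η =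
      deriv v ((x - c₁ * t) / (η - c₂ * t)) * (-(x - c₁ * t) / (η - c₂ * t) ^ 2) := by
    intro η hη
    have hfun : (fun η' => u t x η') = fun η' => v ((x - c₁ * t) / (η' - c₂ * t)) :=
      funext fun η' => hu t x η'
    rw [py, hfun]
    exact ((Hv _).comp η (hNy η hη)).deriv
  have hevY : ∀ᶠ η in nhds y, η - c₂ * t ≠ 0 :=
    ((continuous_id.sub continuous_const).continuousAt).eventually_ne hb
  have heqY : (fun η => g (u t x η) * py u t x η) =ᶠ[nhds y]
      fun η => g (v ((x - c₁ * t) / (η - c₂ * t))) *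
        (deriv v ((x - c₁ * t) / (η - c₂ * t)) * (-(x - c₁ * t) / (η - c₂ * t) ^ 2)) := by
    filter_upwards [hevY] with η hη
    rw [hu, hpy η hη]
  have hR : HasDerivAt (fun η : ℝ => -(x - c₁ * t) / (η - c₂ * t) ^ 2)
      (2 * (x - c₁ * t) / (y - c₂ * t) ^ 3) y := by
    have := (hasDerivAt_const y (-(x - c₁ * t))).div
      (((hasDerivAt_id y).sub_const (c₂ * t)).pow 2) (pow_ne_zero 2 hb)
    refine this.congr_deriv ?_
    simp only [id_eq, Pi.pow_apply]
    field_simp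
    ring
  have hGy : HasDerivAt (fun η => g (v ((x - c₁ * t) / (η - c₂ * t))) *
      (deriv v ((x - c₁ * t) / (η - c₂ * t)) * (-(x - c₁ * t) / (η - c₂ * t) ^ 2)))
      ((deriv g (v ((x - c₁ * t) / (y - c₂ * t))) *
          (deriv v ((x - c₁ * t) / (y - c₂ * t)) * (-(x - c₁ * t) / (y - c₂ * t) ^ 2))) *
        (deriv v ((x - c₁ * t) / (y - c₂ * t)) * (-(x - c₁ * t) / (y - c₂ * t) ^ 2))
       + g (v ((x - c₁ * t) / (y - c₂ * t))) *
        ((deriv (deriv v) ((x - c₁ * t) / (y - c₂ * t)) * (-(x - c₁ * t) / (y - c₂ * t) ^ 2)) *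
          (-(x - c₁ * t) / (y - c₂ * t) ^ 2)
         + deriv v ((x - c₁ * t) / (y - c₂ * t)) * (2 * (x - c₁ * t) / (y - c₂ * t) ^ 3))) y :=
    ((Hg _).comp y ((Hv _).comp y (hNy y hb))).mul
      (((Hv' _).comp y (hNy y hb)).mul hR)
  have hY := heqY.deriv_eq.trans hGy.deriv
  -- T part
  have hlin1 : ∀ τ : ℝ, HasDerivAt (fun τ' : ℝ => x - c₁ * τ') (-c₁) τ := by
    intro τ
    have := (hasDerivAt_const τ x).sub ((hasDerivAt_id τ).const_mul c₁)
    refine this.congr_deriv ?_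
    ring
  have hlin2 : ∀ τ : ℝ, HasDerivAt (fun τ' : ℝ => y - c₂ * τ') (-c₂) τ := by
    intro τ
    have := (hasDerivAt_const τ y).sub ((hasDerivAt_id τ).const_mul c₂)
    refine this.congr_deriv ?_
    ring
  have hNt : ∀ τ : ℝ, y - c₂ * τ ≠ 0 →
      HasDerivAt (fun τ' => (x - c₁ * τ') / (y - c₂ * τ'))
        ((c₂ * (x - c₁ * τ) - c₁ * (y - c₂ * τ)) / (y - c₂ * τ) ^ 2) τ := by
    intro τ hτ
    have := (hlin1 τ).div (hlin2 τ) hτ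
    refine this.congr_deriv ?_
    ring
  have hpt : ∀ τ : ℝ, y - c₂ * τ ≠ 0 → pt u τ x y =
      deriv v ((x - c₁ * τ) / (y - c₂ * τ)) *
        ((c₂ * (x - c₁ * τ) - c₁ * (y - c₂ * τ)) / (y - c₂ * τ) ^ 2) := by
    intro τ hτ
    have hfun : (fun τ' => u τ' x y) = fun τ' => v ((x - c₁ * τ') / (y - c₂ * τ')) :=
      funext fun τ' => hu τ' x y
    rw [pt, hfun]
    exact ((Hv _).comp τ (hNt τ hτ)).deriv
  have hevT : ∀ᶠ τ in nhds t, y - c₂ * τ ≠ 0 :=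
    ((continuous_const.sub (continuous_const.mul continuous_id)).continuousAt).eventually_ne hb
  have heqT : (fun τ => pt u τ x y) =ᶠ[nhds t]
      fun τ => deriv v ((x - c₁ * τ) / (y - c₂ * τ)) *
        ((c₂ * (x - c₁ * τ) - c₁ * (y - c₂ * τ)) / (y - c₂ * τ) ^ 2) := by
    filter_upwards [hevT] with τ hτ
    exact hpt τ hτ
  have hD2 : HasDerivAt (fun τ : ℝ => (c₂ * (x - c₁ * τ) - c₁ * (y - c₂ * τ)) / (y - c₂ * τ) ^ 2)
      (2 * c₂ * (c₂ * (x - c₁ * t) - c₁ * (y - c₂ * t)) / (y - c₂ * t) ^ 3) t := by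
    have hnum : HasDerivAt (fun τ : ℝ => c₂ * (x - c₁ * τ) - c₁ * (y - c₂ * τ))
        (c₂ * -c₁ - c₁ * -c₂) t := ((hlin1 t).const_mul c₂).sub ((hlin2 t).const_mul c₁)
    have := hnum.div ((hlin2 t).pow 2) (pow_ne_zero 2 hb)
    refine this.congr_deriv ?_
    simp only [Pi.pow_apply]
    field_simp
    ring
  have hGt : HasDerivAt (fun τ => deriv v ((x - c₁ * τ) / (y - c₂ * τ)) *
      ((c₂ * (x - c₁ * τ) - c₁ * (y - c₂ * τ)) / (y - c₂ * τ) ^ 2))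
      ((deriv (deriv v) ((x - c₁ * t) / (y - c₂ * t)) *
          ((c₂ * (x - c₁ * t) - c₁ * (y - c₂ * t)) / (y - c₂ * t) ^ 2)) *
        ((c₂ * (x - c₁ * t) - c₁ * (y - c₂ * t)) / (y - c₂ * t) ^ 2)
       + deriv v ((x - c₁ * t) / (y - c₂ * t)) *
          (2 * c₂ * (c₂ * (x - c₁ * t) - c₁ * (y - c₂ * t)) / (y - c₂ * t) ^ 3)) t :=
    (((Hv' _).comp t (hNt t hb))).mul hD2
  have hT := heqT.deriv_eq.trans hGt.deriv
  rw [hT, hX, hY]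
  have key := hkey ((x - c₁ * t) / (y - c₂ * t))
  set N := (x - c₁ * t) / (y - c₂ * t) with hN
  have ha : x - c₁ * t = N * (y - c₂ * t) := by
    rw [hN, div_mul_cancel₀ _ hb]
  rw [ha]
  generalize y - c₂ * t = D at hb ⊢
  field_simp
  linear_combination (-1) * key
end
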